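/- No collineation of a thick generalised (2n+1)-gon is domestic. -/

import Mathlib

open SimpleGraph

/-- The incidence graph of a point-line geometry, on vertex set `P ⊕ L`. -/
def incGraph {P L : Type*} (inc : P → L → Prop) : SimpleGraph (P ⊕ L) where
  Adj x y := (∃ p l, x = Sum.inl p ∧ y = Sum.inr l ∧ inc p l) ∨
             (∃ p l, x = Sum.inr l ∧ y = Sum.inl p ∧ inc p l)
  symm := by
    constructor
    rintro x y (⟨p, l, rfl, rfl, h⟩ | ⟨p, l, rfl, rfl, h⟩)
    · exact Or.inr ⟨p, l, rfl, rfl, h⟩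
    · exact Or.inl ⟨p, l, rfl, rfl, h⟩
  loopless := by
    constructor
    rintro x (⟨p, l, rfl, h, _⟩ | ⟨p, l, rfl, h, _⟩) <;> simp at h

/-- A (weak) generalised `n`-gon: the incidence graph is connected, has diameter `n` and
girth `2n`. -/
structure IsGenPolygon {P L : Type*} (n : ℕ) (inc : P → L → Prop) : Prop where
  connected : (incGraph inc).Connected
  dist_le : ∀ x y : P ⊕ L, (incGraph inc).dist x y ≤ n
  exists_dist_eq : ∃ x y : P ⊕ L, (incGraph inc).dist x y = n
  girth_eq : (incGraph inc).girth = (2 * n : ℕ)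

/-- Thickness: every point is on at least three lines and every line carries at least three
points. -/
def IsThick {P L : Type*} (inc : P → L → Prop) : Prop :=
  (∀ p : P, ∃ l₁ l₂ l₃ : L, inc p l₁ ∧ inc p l₂ ∧ inc p l₃ ∧ l₁ ≠ l₂ ∧ l₁ ≠ l₃ ∧ l₂ ≠ l₃) ∧
  (∀ l : L, ∃ p₁ p₂ p₃ : P, inc p₁ l ∧ inc p₂ l ∧ inc p₃ l ∧ p₁ ≠ p₂ ∧ p₁ ≠ p₃ ∧ p₂ ≠ p₃)

/-- The geometry has parameters `(s, t)`: each line carries `s + 1` points and each point is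
on `t + 1` lines. -/
def HasParams {P L : Type*} (inc : P → L → Prop) (s t : ℕ) : Prop :=
  (∀ l : L, Nat.card {p : P // inc p l} = s + 1) ∧
  (∀ p : P, Nat.card {l : L // inc p l} = t + 1)

/-- A collineation: a pair of permutations of the points and the lines preserving
incidence. -/
def IsCollineation {P L : Type*} (inc : P → L → Prop) (θP : Equiv.Perm P)
    (θL : Equiv.Perm L) : Prop :=
  ∀ p l, inc p l ↔ inc (θP p) (θL l)

/-- Two chambers `{p, l}` and `{p', l'}` of a generalised `m`-gon are opposite. -/
def OppChambers {P L : Type*} (inc : P → L → Prop) (m : ℕ)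
    (p p' : P) (l l' : L) : Prop :=
  ((incGraph inc).dist (Sum.inl p) (Sum.inl p') = m ∧
    (incGraph inc).dist (Sum.inr l) (Sum.inr l') = m) ∨
  ((incGraph inc).dist (Sum.inl p) (Sum.inr l') = m ∧
    (incGraph inc).dist (Sum.inr l) (Sum.inl p') = m)

/-- A collineation is domestic if it maps no chamber to an opposite chamber. -/
def IsDomesticColl {P L : Type*} (inc : P → L → Prop) (m : ℕ) (θP : Equiv.Perm P)
    (θL : Equiv.Perm L) : Prop :=
  ¬ ∃ p l, inc p l ∧ OppChambers inc m p (θP p) l (θL l)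

section AuxGP
variable {V : Type*} {G : SimpleGraph V}

/-- Two paths between the same pair of vertices whose total length is less than the
length of every cycle must be equal. -/
lemma gp_two_paths_eq {g : ℕ}
    (hcyc : ∀ (a : V) (c : G.Walk a a), c.IsCycle → g ≤ c.length)
    {a b : V} (p q : G.Walk a b) (hp : p.IsPath) (hq : q.IsPath)
    (hlen : p.length + q.length < g) : p = q := by
  classical
  by_contra hne
  set S : Set (Sym2 V) := {e | e ∈ p.edges ∨ e ∈ q.edges} with hS
  set H : SimpleGraph V := SimpleGraph.fromEdgeSet S with hH
  have hmemG : ∀ e, e ∈ S → e ∈ G.edgeSet := by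
    rintro e (he | he)
    · exact p.edges_subset_edgeSet he
    · exact q.edges_subset_edgeSet he
  have hmemH : ∀ e, e ∈ S → e ∈ H.edgeSet := by
    intro e he
    rw [hH, edgeSet_fromEdgeSet]
    exact ⟨he, G.not_isDiag_of_mem_edgeSet (hmemG e he)⟩
  have hle : H ≤ G := by
    intro v w hvw
    rw [hH, fromEdgeSet_adj] at hvw
    exact (G.mem_edgeSet).1 (hmemG _ hvw.1)
  have hpH : ∀ e ∈ p.edges, e ∈ H.edgeSet := fun e he => hmemH e (Or.inl he)
  have hqH : ∀ e ∈ q.edges, e ∈ H.edgeSet := fun e he => hmemH e (Or.inr he)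
  have hback : ∀ (r : G.Walk a b) (hr : ∀ e ∈ r.edges, e ∈ H.edgeSet),
      (r.transfer H hr).transfer G (by simp [Walk.edges_transfer]; exact r.edges_subset_edgeSet) = r := by
    intro r hr
    rw [Walk.transfer_transfer]
    exact Walk.transfer_self r
  have hneH : p.transfer H hpH ≠ q.transfer H hqH := by
    intro h
    apply hne
    rw [← hback p hpH, ← hback q hqH]
    congr 1
  have hnac : ¬ H.IsAcyclic := by
    intro hac
    have := hac.path_unique ⟨p.transfer H hpH, hp.transfer hpH⟩ ⟨q.transfer H hqH, hq.transfer hqH⟩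
    exact hneH (congrArg Subtype.val this)
  rw [IsAcyclic] at hnac
  push_neg at hnac
  obtain ⟨v, c, hc⟩ := hnac
  have hcG : (c.mapLe hle).IsCycle := hc.mapLe hle
  have hglen : g ≤ c.length := by
    have := hcyc v (c.mapLe hle) hcG
    simpa [Walk.mapLe] using this
  have hsub : c.edges ⊆ p.edges ++ q.edges := by
    intro e he
    have : e ∈ H.edgeSet := c.edges_subset_edgeSet he
    rw [hH, edgeSet_fromEdgeSet] at this
    rcases this.1 with h | h
    · exact List.mem_append_left _ h
    · exact List.mem_append_right _ h
  have hnodup : c.edges.Nodup := hc.isTrail.edges_nodup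
  have := (hnodup.subperm hsub).length_le
  rw [List.length_append, Walk.length_edges, Walk.length_edges, Walk.length_edges] at this
  omega


lemma gp_isPath_concat {a b c : V} {p : G.Walk a b} (hp : p.IsPath) (h : G.Adj b c)
    (hc : c ∉ p.support) : (p.concat h).IsPath := by
  have : (p.concat h).reverse.IsPath := by
    rw [Walk.reverse_concat]
    exact (hp.reverse).cons (by simpa using hc)
  have h2 := this.reverse
  rw [Walk.reverse_reverse] at h2
  exact h2

open Classical in
lemma gp_dist_le_of_mem_support {a b v : V} (w : G.Walk a b) (hv : v ∈ w.support) :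
    G.dist a v ≤ w.length :=
  le_trans (dist_le (w.takeUntil v hv)) (Walk.length_takeUntil_le w hv)

open Classical in
lemma gp_dist_split (hc : G.Connected) {a b v : V} (w : G.Walk a b)
    (hw : w.length = G.dist a b) (hv : v ∈ w.support) :
    G.dist a v + G.dist v b = G.dist a b := by
  have h1 : (w.takeUntil v hv).length + (w.dropUntil v hv).length = w.length := by
    rw [← Walk.length_append, Walk.take_spec]
  have h2 := dist_le (w.takeUntil v hv)
  have h3 := dist_le (w.dropUntil v hv)
  have h4 := hc.dist_triangle (u := a) (v := v) (w := b)
  omega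

lemma gp_adj_dist_le {x y : V} (h : G.Adj x y) : G.dist x y ≤ 1 := by
  simpa using dist_le (Walk.cons h Walk.nil)

/-- uniqueness of the neighbour of `b` that is closer to `a`, given short girth bound. -/
lemma gp_unique_pred {g : ℕ}
    (hcyc : ∀ (a : V) (c : G.Walk a a), c.IsCycle → g ≤ c.length)
    (hc : G.Connected) {a b w w' : V} (h1 : G.Adj w b) (h2 : G.Adj w' b)
    (hd1 : G.dist a w + 1 = G.dist a b) (hd2 : G.dist a w' + 1 = G.dist a b)
    (hlt : 2 * G.dist a b < g) : w = w' := by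
  obtain ⟨p1, hp1, hl1⟩ := hc.exists_path_of_dist a w
  obtain ⟨p2, hp2, hl2⟩ := hc.exists_path_of_dist a w'
  have hb1 : b ∉ p1.support := by
    intro hb
    have := gp_dist_le_of_mem_support p1 hb
    omega
  have hb2 : b ∉ p2.support := by
    intro hb
    have := gp_dist_le_of_mem_support p2 hb
    omega
  have hP1 : (p1.concat h1).IsPath := gp_isPath_concat hp1 h1 hb1
  have hP2 : (p2.concat h2).IsPath := gp_isPath_concat hp2 h2 hb2
  have heq : p1.concat h1 = p2.concat h2 := by
    apply gp_two_paths_eq hcyc _ _ hP1 hP2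
    rw [Walk.length_concat, Walk.length_concat]
    omega
  obtain ⟨hv, -⟩ := Walk.concat_inj heq
  exact hv

lemma gp_walk_parity (typ : V → Bool) (htyp : ∀ x y, G.Adj x y → typ y = !typ x)
    {x y : V} (w : G.Walk x y) : (typ x = typ y) ↔ Even w.length := by
  induction w with
  | nil => simp
  | cons h p ih =>
    have hz := htyp _ _ h
    rw [Walk.length_cons, Nat.even_add_one, ← ih, hz]
    cases typ x <;> cases typ y <;> simp

lemma gp_dist_parity (hc : G.Connected) (typ : V → Bool)
    (htyp : ∀ x y, G.Adj x y → typ y = !typ x) (x y : V) :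
    (typ x = typ y) ↔ Even (G.dist x y) := by
  obtain ⟨w, hw⟩ := hc.exists_walk_length_eq_dist x y
  rw [← hw]
  exact gp_walk_parity typ htyp w


variable {V : Type*} {G : SimpleGraph V}

theorem gp_core (m : ℕ) (hm : 3 ≤ m) (hodd : m % 2 = 1)
    (hc : G.Connected)
    (hdiam : ∀ x y : V, G.dist x y ≤ m)
    (hcyc : ∀ (a : V) (c : G.Walk a a), c.IsCycle → 2 * m ≤ c.length)
    (typ : V → Bool) (htyp : ∀ x y, G.Adj x y → typ y = !typ x)
    (hthree : ∀ x : V, ∃ y₁ y₂ y₃ : V, G.Adj x y₁ ∧ G.Adj x y₂ ∧ G.Adj x y₃ ∧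
      y₁ ≠ y₂ ∧ y₁ ≠ y₃ ∧ y₂ ≠ y₃)
    (Θ : V ≃ V) (hΘadj : ∀ x y, G.Adj x y ↔ G.Adj (Θ x) (Θ y))
    (hΘtyp : ∀ x, typ (Θ x) = typ x)
    (hdom : ∀ x y, G.Adj x y → ¬(G.dist x (Θ y) = m ∧ G.dist y (Θ x) = m)) :
    ∀ x, Θ x = x := by
  classical
  -- Θ preserves distances
  have hΘdist : ∀ x y, G.dist (Θ x) (Θ y) = G.dist x y := by
    have key : ∀ (e : V ≃ V), (∀ x y, G.Adj x y → G.Adj (e x) (e y)) →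
        ∀ x y, G.dist (e x) (e y) ≤ G.dist x y := by
      intro e he x y
      obtain ⟨w, hw⟩ := hc.exists_walk_length_eq_dist x y
      have := dist_le (w.map (f := ⟨e, fun h => he _ _ h⟩))
      rwa [Walk.length_map, hw] at this
    intro x y
    have h1 := key Θ (fun x y h => (hΘadj x y).mp h) x y
    have h2 : ∀ x y, G.Adj x y → G.Adj (Θ.symm x) (Θ.symm y) := by
      intro x y h
      have := (hΘadj (Θ.symm x) (Θ.symm y)).mpr
      simp only [Equiv.apply_symm_apply] at this
      exact this h
    have h3 := key Θ.symm h2 (Θ x) (Θ y)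
    simp only [Equiv.symm_apply_apply] at h3
    omega
  by_contra hcon
  push_neg at hcon
  obtain ⟨x₀, hx₀⟩ := hcon
  -- maximal displacement
  set Q : ℕ → Prop := fun k => ∃ y : V, G.dist y (Θ y) = k with hQ
  set M : ℕ := Nat.findGreatest Q m with hMdef
  have hM_max : ∀ y : V, G.dist y (Θ y) ≤ M :=
    fun y => Nat.le_findGreatest (hdiam y _) ⟨y, rfl⟩
  have hM_ex : ∃ y : V, G.dist y (Θ y) = M :=
    Nat.findGreatest_spec (P := Q) (hdiam x₀ (Θ x₀)) ⟨x₀, rfl⟩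
  have hMle : M ≤ m := Nat.findGreatest_le m
  have hMpos : 0 < M := by
    have h1 : 0 < G.dist x₀ (Θ x₀) := hc.pos_dist_of_ne (fun he => hx₀ he.symm)
    have := hM_max x₀
    omega
  have hMeven : M % 2 = 0 := by
    obtain ⟨x, hx⟩ := hM_ex
    have := (gp_dist_parity hc typ htyp x (Θ x)).mp (by rw [hΘtyp])
    rw [hx, Nat.even_iff] at this
    exact this
  obtain ⟨x, hx⟩ := hM_ex
  -- basic distance facts about neighbours
  have hnbr : ∀ u, G.Adj x u → G.dist u (Θ x) + 1 = M ∨ G.dist u (Θ x) = M + 1 := by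
    intro u hu
    have hparity : ¬ Even (G.dist u (Θ x)) := by
      rw [← gp_dist_parity hc typ htyp]
      rw [htyp _ _ hu, hΘtyp]
      simp
    rw [Nat.even_iff] at hparity
    have h1 : G.dist u (Θ x) ≤ G.dist u x + G.dist x (Θ x) := hc.dist_triangle
    have h2 : G.dist x (Θ x) ≤ G.dist x u + G.dist u (Θ x) := hc.dist_triangle
    have h3 : G.dist u x ≤ 1 := gp_adj_dist_le hu.symm
    have h4 : G.dist x u ≤ 1 := gp_adj_dist_le hu
    omega
  have hnbrΘ : ∀ u, G.Adj x u → G.dist x (Θ u) + 1 = M ∨ G.dist x (Θ u) = M + 1 := by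
    intro u hu
    have hparity : ¬ Even (G.dist x (Θ u)) := by
      rw [← gp_dist_parity hc typ htyp]
      rw [hΘtyp, htyp _ _ hu]
      simp
    rw [Nat.even_iff] at hparity
    have hAdjΘ : G.Adj (Θ x) (Θ u) := (hΘadj x u).mp hu
    have h1 : G.dist x (Θ u) ≤ G.dist x (Θ x) + G.dist (Θ x) (Θ u) := hc.dist_triangle
    have h2 : G.dist x (Θ x) ≤ G.dist x (Θ u) + G.dist (Θ u) (Θ x) := hc.dist_triangle
    have h3 : G.dist (Θ x) (Θ u) ≤ 1 := gp_adj_dist_le hAdjΘ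
    have h4 : G.dist (Θ u) (Θ x) ≤ 1 := gp_adj_dist_le hAdjΘ.symm
    omega
  -- uniqueness of close neighbours
  have hdΘxx : G.dist (Θ x) x = M := by rw [dist_comm]; exact hx
  have hMlt : 2 * M < 2 * m := by
    have : M ≠ m := by intro h; rw [h] at hMeven; omega
    omega
  have hU1 : ∀ u u', G.Adj x u → G.Adj x u' → G.dist u (Θ x) + 1 = M →
      G.dist u' (Θ x) + 1 = M → u = u' := by
    intro u u' hu hu' hd hd'
    refine gp_unique_pred hcyc hc hu.symm hu'.symm ?_ ?_ (by rw [hdΘxx]; omega)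
    · rw [hdΘxx, dist_comm]; exact hd
    · rw [hdΘxx, dist_comm]; exact hd'
  have hU2 : ∀ u u', G.Adj x u → G.Adj x u' → G.dist x (Θ u) + 1 = M →
      G.dist x (Θ u') + 1 = M → u = u' := by
    intro u u' hu hu' hd hd'
    have hAdj1 : G.Adj (Θ u) (Θ x) := ((hΘadj x u).mp hu).symm
    have hAdj2 : G.Adj (Θ u') (Θ x) := ((hΘadj x u').mp hu').symm
    have := gp_unique_pred hcyc hc hAdj1 hAdj2 (by rw [hx]; exact hd)
      (by rw [hx]; exact hd') (by rw [hx]; omega)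
    exact Θ.injective this
  obtain ⟨y₁, y₂, y₃, a1, a2, a3, n12, n13, n23⟩ := hthree x
  rcases (by omega : M + 1 = m ∨ M + 3 ≤ m) with hcase | hcase
  · -- Case A : maximal displacement m - 1
    have key : ∀ y, G.Adj x y → G.dist y (Θ x) + 1 = M ∨ G.dist x (Θ y) + 1 = M := by
      intro y hy
      by_contra hk
      push_neg at hk
      have h1 := hnbr y hy
      have h2 := hnbrΘ y hy
      have hd1 : G.dist y (Θ x) = m := by omega
      have hd2 : G.dist x (Θ y) = m := by omega
      exact hdom x y hy ⟨hd2, hd1⟩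
    rcases key y₁ a1 with h1 | h1 <;> rcases key y₂ a2 with h2 | h2 <;>
      rcases key y₃ a3 with h3 | h3 <;>
      first
        | exact n12 (hU1 y₁ y₂ a1 a2 h1 h2)
        | exact n12 (hU2 y₁ y₂ a1 a2 h1 h2)
        | exact n13 (hU1 y₁ y₃ a1 a3 h1 h3)
        | exact n13 (hU2 y₁ y₃ a1 a3 h1 h3)
        | exact n23 (hU1 y₂ y₃ a2 a3 h2 h3)
        | exact n23 (hU2 y₂ y₃ a2 a3 h2 h3)
  · -- Case B : 0 < M ≤ m - 3
    obtain ⟨γ, hγP, hγL⟩ := hc.exists_path_of_dist x (Θ x)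
    rw [hx] at hγL
    have hγnil : ¬ γ.Nil := by rw [Walk.not_nil_iff_lt_length]; omega
    obtain ⟨x1, hadj1, γ', hγeq⟩ := Walk.not_nil_iff.mp hγnil
    subst hγeq
    rw [Walk.length_cons] at hγL
    have hdx1 : G.dist x1 (Θ x) + 1 = M := by
      have h1 : G.dist x1 (Θ x) ≤ γ'.length := dist_le γ'
      have h2 : G.dist x (Θ x) ≤ G.dist x x1 + G.dist x1 (Θ x) := hc.dist_triangle
      have h3 : G.dist x x1 ≤ 1 := gp_adj_dist_le hadj1
      omega
    have claim : ∀ u, G.Adj x u → u ≠ x1 → G.dist x (Θ u) + 1 = M := by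
      intro u hxu hux1
      have hAdjΘ : G.Adj (Θ x) (Θ u) := (hΘadj x u).mp hxu
      have hdux : G.dist u (Θ x) = M + 1 := by
        rcases hnbr u hxu with h | h
        · exact absurd (hU1 u x1 hxu hadj1 h hdx1) hux1
        · exact h
      have hδu : G.dist u (Θ u) = M := by
        have h1 := hM_max u
        have h2 : G.dist u (Θ x) ≤ G.dist u (Θ u) + G.dist (Θ u) (Θ x) :=
          hc.dist_triangle
        have h3 : G.dist (Θ u) (Θ x) ≤ 1 := gp_adj_dist_le hAdjΘ.symm
        omega
      set W : G.Walk u (Θ u) :=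
        Walk.cons hxu.symm ((Walk.cons hadj1 γ').concat hAdjΘ) with hW
      have hWlen : W.length = M + 2 := by
        rw [hW, Walk.length_cons, Walk.length_concat, Walk.length_cons]
        omega
      obtain ⟨pu, hpuP, hpuL⟩ := hc.exists_path_of_dist u (Θ u)
      rw [hδu] at hpuL
      have hbeq : W.bypass = pu := by
        apply gp_two_paths_eq hcyc _ _ (Walk.bypass_isPath W) hpuP
        have := Walk.length_bypass_le W
        omega
      have hsub : pu.support ⊆ W.support := by
        rw [← hbeq]
        exact Walk.support_bypass_subset W
      have hpunil : ¬ pu.Nil := by rw [Walk.not_nil_iff_lt_length]; omega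
      obtain ⟨v1, hadjv1, pu', hpueq⟩ := Walk.not_nil_iff.mp hpunil
      subst hpueq
      rw [Walk.length_cons] at hpuL
      have hv1d : G.dist v1 (Θ u) + 1 = M := by
        have h1 : G.dist v1 (Θ u) ≤ pu'.length := dist_le pu'
        have h2 : G.dist u (Θ u) ≤ G.dist u v1 + G.dist v1 (Θ u) := hc.dist_triangle
        have h3 : G.dist u v1 ≤ 1 := gp_adj_dist_le hadjv1
        omega
      have hv1W : v1 ∈ W.support := hsub (by simp)
      rw [hW] at hv1W
      simp only [Walk.support_cons, Walk.support_concat, List.concat_eq_append,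
        List.mem_cons, List.mem_append, List.mem_singleton] at hv1W
      rcases hv1W with h | (h | h) | (h | h)
      · exact absurd h.symm hadjv1.ne
      · rw [h] at hv1d
        exact hv1d
      · -- v1 on the geodesic from x to Θ x
        have hmem : v1 ∈ (Walk.cons hadj1 γ').support := by
          rw [Walk.support_cons]
          exact List.mem_cons_of_mem _ h
        have hsplit : G.dist x v1 + G.dist v1 (Θ x) = M := by
          have := gp_dist_split hc (Walk.cons hadj1 γ')
            (by rw [Walk.length_cons, hx]; omega) hmem
          rwa [hx] at this
        have h2 : G.dist u (Θ x) ≤ G.dist u v1 + G.dist v1 (Θ x) := hc.dist_triangle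
        have h3 : G.dist u v1 ≤ 1 := gp_adj_dist_le hadjv1
        have h4 : G.dist x v1 = 0 := by omega
        have h5 : v1 = x := by
          have := (hc.dist_eq_zero_iff (u := x) (v := v1)).mp h4
          exact this.symm
        rw [h5] at hv1d
        exact hv1d
      · rw [h] at hv1d
        rw [dist_self] at hv1d
        omega
      · exact absurd h List.not_mem_nil
    -- two neighbours of x distinct from x1
    obtain ⟨u, u', hu, hu', huu', hux1, hu'x1⟩ :
        ∃ u u', G.Adj x u ∧ G.Adj x u' ∧ u ≠ u' ∧ u ≠ x1 ∧ u' ≠ x1 := by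
      by_cases h1 : y₁ = x1
      · exact ⟨y₂, y₃, a2, a3, n23, by rw [← h1]; exact n12.symm,
          by rw [← h1]; exact n13.symm⟩
      · by_cases h2 : y₂ = x1
        · exact ⟨y₁, y₃, a1, a3, n13, h1, by rw [← h2]; exact n23.symm⟩
        · exact ⟨y₁, y₂, a1, a2, n12, h1, h2⟩
    exact huu' (hU2 u u' hu hu' (claim u hu hux1) (claim u' hu' hu'x1))

end AuxGP

/-- No (nontrivial) collineation of a thick generalised `(2n+1)`-gon is domestic. -/

lemma incGraph_adj {P L : Type*} (inc : P → L → Prop) (x y : P ⊕ L) :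
    (incGraph inc).Adj x y ↔
      ((∃ p l, x = Sum.inl p ∧ y = Sum.inr l ∧ inc p l) ∨
       (∃ p l, x = Sum.inr l ∧ y = Sum.inl p ∧ inc p l)) := Iff.rfl

theorem no_domestic_collineation_odd_gon {P L : Type*} (n : ℕ) (hn : 1 ≤ n)
    (inc : P → L → Prop) (hpoly : IsGenPolygon (2 * n + 1) inc) (hthick : IsThick inc)
    (θP : Equiv.Perm P) (θL : Equiv.Perm L) (hcoll : IsCollineation inc θP θL)
    (hnontriv : ¬ ((∀ p, θP p = p) ∧ (∀ l, θL l = l))) :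
    ¬ IsDomesticColl inc (2 * n + 1) θP θL := by
  intro hdomestic
  set m : ℕ := 2 * n + 1 with hm
  set G : SimpleGraph (P ⊕ L) := incGraph inc with hG
  -- cycles have length at least 2 * m
  have hcyc : ∀ (a : P ⊕ L) (c : G.Walk a a), c.IsCycle → 2 * m ≤ c.length := by
    intro a c hcycle
    have h1 : G.egirth ≤ (c.length : ℕ∞) :=
      calc G.egirth ≤ ⨅ _ : c.IsCycle, (c.length : ℕ∞) :=
            le_trans (iInf_le _ a) (iInf_le _ c)
        _ ≤ (c.length : ℕ∞) := iInf_le _ hcycle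
    have h2 : G.girth ≤ c.length := by
      have := ENat.toNat_le_toNat h1 (by simp)
      simpa [SimpleGraph.girth] using this
    have h3 := hpoly.girth_eq
    rw [← hG] at h3
    omega
  -- the type (point or line) of a vertex
  set typ : P ⊕ L → Bool := Sum.isLeft with htypdef
  have htyp : ∀ x y, G.Adj x y → typ y = !typ x := by
    intro x y h
    rcases (incGraph_adj inc x y).mp h with ⟨p, l, rfl, rfl, _⟩ | ⟨p, l, rfl, rfl, _⟩ <;> simp [htypdef]
  -- thickness : every vertex has three distinct neighbours
  have hthree : ∀ x : P ⊕ L, ∃ y₁ y₂ y₃ : P ⊕ L, G.Adj x y₁ ∧ G.Adj x y₂ ∧ G.Adj x y₃ ∧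
      y₁ ≠ y₂ ∧ y₁ ≠ y₃ ∧ y₂ ≠ y₃ := by
    intro x
    cases x with
    | inl p =>
      obtain ⟨l₁, l₂, l₃, h1, h2, h3, n12, n13, n23⟩ := hthick.1 p
      exact ⟨Sum.inr l₁, Sum.inr l₂, Sum.inr l₃,
        Or.inl ⟨p, l₁, rfl, rfl, h1⟩, Or.inl ⟨p, l₂, rfl, rfl, h2⟩,
        Or.inl ⟨p, l₃, rfl, rfl, h3⟩,
        by simpa using n12, by simpa using n13, by simpa using n23⟩
    | inr l =>
      obtain ⟨p₁, p₂, p₃, h1, h2, h3, n12, n13, n23⟩ := hthick.2 l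
      exact ⟨Sum.inl p₁, Sum.inl p₂, Sum.inl p₃,
        Or.inr ⟨p₁, l, rfl, rfl, h1⟩, Or.inr ⟨p₂, l, rfl, rfl, h2⟩,
        Or.inr ⟨p₃, l, rfl, rfl, h3⟩,
        by simpa using n12, by simpa using n13, by simpa using n23⟩
  -- the collineation as an equivalence of the vertex set
  set Θ : (P ⊕ L) ≃ (P ⊕ L) := Equiv.sumCongr θP θL with hΘdef
  have hΘinl : ∀ p, Θ (Sum.inl p) = Sum.inl (θP p) := fun p => rfl
  have hΘinr : ∀ l, Θ (Sum.inr l) = Sum.inr (θL l) := fun l => rfl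
  have fwd : ∀ (fP : Equiv.Perm P) (fL : Equiv.Perm L),
      (∀ p l, inc p l ↔ inc (fP p) (fL l)) → ∀ x y, G.Adj x y →
      G.Adj (Equiv.sumCongr fP fL x) (Equiv.sumCongr fP fL y) := by
    intro fP fL hf x y h
    rcases (incGraph_adj inc x y).mp h with ⟨p, l, rfl, rfl, hi⟩ | ⟨p, l, rfl, rfl, hi⟩
    · exact Or.inl ⟨fP p, fL l, rfl, rfl, (hf p l).mp hi⟩
    · exact Or.inr ⟨fP p, fL l, rfl, rfl, (hf p l).mp hi⟩
  have hcoll' : ∀ p l, inc p l ↔ inc (θP.symm p) (θL.symm l) := by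
    intro p l
    have := hcoll (θP.symm p) (θL.symm l)
    simp only [Equiv.apply_symm_apply] at this
    exact this.symm
  have hΘadj : ∀ x y, G.Adj x y ↔ G.Adj (Θ x) (Θ y) := by
    intro x y
    constructor
    · exact fwd θP θL hcoll x y
    · intro h
      have := fwd θP.symm θL.symm hcoll' _ _ h
      simpa [hΘdef, Equiv.sumCongr_apply, Sum.map_map] using this
  have hΘtyp : ∀ x, typ (Θ x) = typ x := by
    intro x
    cases x <;> rfl
  have hdom : ∀ x y, G.Adj x y → ¬(G.dist x (Θ y) = m ∧ G.dist y (Θ x) = m) := by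
    intro x y hadj hopp
    apply hdomestic
    rcases (incGraph_adj inc x y).mp hadj with ⟨p, l, rfl, rfl, hi⟩ | ⟨p, l, rfl, rfl, hi⟩
    · exact ⟨p, l, hi, Or.inr ⟨hopp.1, hopp.2⟩⟩
    · exact ⟨p, l, hi, Or.inr ⟨hopp.2, hopp.1⟩⟩
  have hfix := gp_core (G := G) m (by omega) (by omega) hpoly.connected hpoly.dist_le
    hcyc typ htyp hthree Θ hΘadj hΘtyp hdom
  apply hnontriv
  constructor
  · intro p
    have := hfix (Sum.inl p)
    rw [hΘinl] at this
    exact Sum.inl.inj this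
  · intro l
    have := hfix (Sum.inr l)
    rw [hΘinr] at this
    exact Sum.inr.inj this
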